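/- Let (E, 𝓔) be a measurable space equipped with a σ-finite measure λ, let K ≥ 1, and let γ_0, γ_1, …, γ_K : E → (0,∞) be measurable with Z_k := ∫ γ_k dλ ∈ (0,∞) for each k. For k = 1, …, K−1 let M_k be a Markov (probability) kernel on E that leaves the probability measure μ_k with density γ_k/Z_k with respect to λ invariant (i.e., the pushforward of μ_k through M_k equals μ_k). Let (X_0, X_1, …, X_{K−1}) be the Markov chain with X_0 distributed as μ_0 (density γ_0/Z_0) and X_k ∼ M_k(X_{k−1}, ·) for k = 1, …, K−1. Then the annealed importance sampling weight W := ∏_{k=0}^{K−1} γ_{k+1}(X_k)/γ_k(X_k) satisfies E[W] = Z_K / Z_0. -/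

import Mathlib

open MeasureTheory ProbabilityTheory ENNReal

/-- `aisExp M w n j x` is the conditional expectation, along the Markov chain with
transition kernels `M` (`X_{j+1} ∼ M_{j+1}(X_j, ·)`), of the product of the remaining `n`
annealed-importance-sampling weight factors `w_j(X_j)·w_{j+1}(X_{j+1})⋯w_{j+n-1}(X_{j+n-1})`,
given `X_j = x`. -/
noncomputable def aisExp {E : Type*} [MeasurableSpace E]
    (M : ℕ → Kernel E E) (w : ℕ → E → ℝ≥0∞) : ℕ → ℕ → E → ℝ≥0∞
  | 0, _, _ => 1
  | 1, j, x => w j x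
  | (n + 2), j, x => w j x * ∫⁻ y, aisExp M w (n + 1) (j + 1) y ∂(M (j + 1) x)

private lemma aisExp_measurable {E : Type*} [MeasurableSpace E]
    (M : ℕ → Kernel E E) (w : ℕ → E → ℝ≥0∞) :
    ∀ n j, (∀ k, j ≤ k → k < j + n → Measurable (w k)) →
      (∀ k, j + 1 ≤ k → k + 1 ≤ j + n → IsSFiniteKernel (M k)) →
      Measurable (aisExp M w n j)
  | 0, j, _, _ => by simp [aisExp]
  | 1, j, h, _ => by simpa [aisExp] using h j le_rfl (by omega)
  | (n + 2), j, h, hsf => by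
    have h1 : Measurable (aisExp M w (n + 1) (j + 1)) :=
      aisExp_measurable M w (n + 1) (j + 1)
        (fun k hk hk' => h k (by omega) (by omega))
        (fun k hk hk' => hsf k (by omega) (by omega))
    have : IsSFiniteKernel (M (j + 1)) := hsf (j + 1) le_rfl (by omega)
    have h2 : Measurable fun x => ∫⁻ y, aisExp M w (n + 1) (j + 1) y ∂(M (j + 1) x) :=
      h1.lintegral_kernel
    have := (h j le_rfl (by omega)).mul h2
    simpa [aisExp, Pi.mul_def] using this

private lemma ais_key {E : Type*} [MeasurableSpace E]
    (ν : Measure E) [SigmaFinite ν] (K : ℕ)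
    (γ : ℕ → E → ℝ)
    (hγ_pos : ∀ k, k ≤ K → ∀ x, 0 < γ k x)
    (hγ_meas : ∀ k, k ≤ K → Measurable (γ k))
    (Z : ℕ → ℝ≥0∞)
    (hZ : ∀ k, k ≤ K → Z k = ∫⁻ x, ENNReal.ofReal (γ k x) ∂ν)
    (hZ_pos : ∀ k, k ≤ K → 0 < Z k) (hZ_fin : ∀ k, k ≤ K → Z k < ⊤)
    (M : ℕ → Kernel E E) (hM : ∀ k, 1 ≤ k → k ≤ K - 1 → IsMarkovKernel (M k))
    (hinv : ∀ k, 1 ≤ k → k ≤ K - 1 →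
      Measure.bind ((Z k)⁻¹ • ν.withDensity fun x => ENNReal.ofReal (γ k x)) (M k) =
        (Z k)⁻¹ • ν.withDensity fun x => ENNReal.ofReal (γ k x)) :
    ∀ n j, 1 ≤ n → j + n ≤ K →
      (∫⁻ x, aisExp M (fun k x => ENNReal.ofReal (γ (k + 1) x / γ k x)) n j x
          ∂((Z j)⁻¹ • ν.withDensity fun x => ENNReal.ofReal (γ j x))) = Z (j + n) / Z j
  | 0, j, hn, _ => by omega
  | 1, j, _, hjK => by
    have hmj : Measurable fun x => ENNReal.ofReal (γ j x) :=
      (hγ_meas j (by omega)).ennreal_ofReal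
    have hmw : Measurable fun x => ENNReal.ofReal (γ (j + 1) x / γ j x) :=
      ((hγ_meas (j + 1) (by omega)).div (hγ_meas j (by omega))).ennreal_ofReal
    simp only [aisExp]
    rw [lintegral_smul_measure, lintegral_withDensity_eq_lintegral_mul ν hmj hmw]
    have hpt : ∀ x, ((fun x => ENNReal.ofReal (γ j x)) *
        fun x => ENNReal.ofReal (γ (j + 1) x / γ j x)) x =
        ENNReal.ofReal (γ (j + 1) x) := by
      intro x
      have hj0 : γ j x ≠ 0 := ne_of_gt (hγ_pos j (by omega) x)
      simp only [Pi.mul_apply]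
      rw [← ENNReal.ofReal_mul (le_of_lt (hγ_pos j (by omega) x)),
        mul_div_cancel₀ _ hj0]
    rw [lintegral_congr hpt, ← hZ (j + 1) (by omega), div_eq_mul_inv, mul_comm, smul_eq_mul]
  | (n + 2), j, _, hjK => by
    set w : ℕ → E → ℝ≥0∞ := fun k x => ENNReal.ofReal (γ (k + 1) x / γ k x) with hw
    have hmj : Measurable fun x => ENNReal.ofReal (γ j x) :=
      (hγ_meas j (by omega)).ennreal_ofReal
    have hmj1 : Measurable fun x => ENNReal.ofReal (γ (j + 1) x) :=
      (hγ_meas (j + 1) (by omega)).ennreal_ofReal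
    have hmw : Measurable (w j) :=
      ((hγ_meas (j + 1) (by omega)).div (hγ_meas j (by omega))).ennreal_ofReal
    have hMarkov : IsMarkovKernel (M (j + 1)) := hM (j + 1) (by omega) (by omega)
    have hsf : ∀ k, j + 1 ≤ k → k + 1 ≤ j + (n + 2) → IsSFiniteKernel (M k) := by
      intro k hk hk'
      have : IsMarkovKernel (M k) := hM k (by omega) (by omega)
      infer_instance
    have hf : Measurable (aisExp M w (n + 1) (j + 1)) :=
      aisExp_measurable M w (n + 1) (j + 1)
        (fun k hk hk' =>
          ((hγ_meas (k + 1) (by omega)).div (hγ_meas k (by omega))).ennreal_ofReal)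
        (fun k hk hk' => hsf k (by omega) (by omega))
    have hF : Measurable fun x => ∫⁻ y, aisExp M w (n + 1) (j + 1) y ∂(M (j + 1) x) :=
      hf.lintegral_kernel
    -- IH
    have IH := ais_key ν K γ hγ_pos hγ_meas Z hZ hZ_pos hZ_fin M hM hinv
      (n + 1) (j + 1) (by omega) (by omega)
    have hZ1ne : Z (j + 1) ≠ 0 := ne_of_gt (hZ_pos (j + 1) (by omega))
    have hZ1top : Z (j + 1) ≠ ⊤ := ne_of_lt (hZ_fin (j + 1) (by omega))
    -- withDensity γ_{j+1} = Z_{j+1} • μ_{j+1}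
    have hwd : ν.withDensity (fun x => ENNReal.ofReal (γ (j + 1) x)) =
        Z (j + 1) • ((Z (j + 1))⁻¹ • ν.withDensity fun x => ENNReal.ofReal (γ (j + 1) x)) := by
      rw [smul_smul, ENNReal.mul_inv_cancel hZ1ne hZ1top, one_smul]
    calc
      (∫⁻ x, aisExp M w (n + 2) j x
          ∂((Z j)⁻¹ • ν.withDensity fun x => ENNReal.ofReal (γ j x)))
        = (Z j)⁻¹ * ∫⁻ x, (fun x => ENNReal.ofReal (γ j x)) x *
            ((w j x) * ∫⁻ y, aisExp M w (n + 1) (j + 1) y ∂(M (j + 1) x)) ∂ν := by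
          simp only [aisExp]
          rw [lintegral_smul_measure,
            lintegral_withDensity_eq_lintegral_mul ν hmj
              (g := fun x => w j x * ∫⁻ y, aisExp M w (n + 1) (j + 1) y ∂(M (j + 1) x)) (hmw.mul hF)]
          rfl
      _ = (Z j)⁻¹ * ∫⁻ x, (fun x => ENNReal.ofReal (γ (j + 1) x)) x *
            (∫⁻ y, aisExp M w (n + 1) (j + 1) y ∂(M (j + 1) x)) ∂ν := by
          congr 1
          apply lintegral_congr
          intro x
          have hj0 : γ j x ≠ 0 := ne_of_gt (hγ_pos j (by omega) x)
          simp only [hw, ← mul_assoc]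
          rw [← ENNReal.ofReal_mul (le_of_lt (hγ_pos j (by omega) x)),
            mul_div_cancel₀ _ hj0]
      _ = (Z j)⁻¹ * ∫⁻ x, (∫⁻ y, aisExp M w (n + 1) (j + 1) y ∂(M (j + 1) x))
            ∂(ν.withDensity fun x => ENNReal.ofReal (γ (j + 1) x)) := by
          rw [lintegral_withDensity_eq_lintegral_mul ν hmj1 hF]
          rfl
      _ = (Z j)⁻¹ * (Z (j + 1) * ∫⁻ x, (∫⁻ y, aisExp M w (n + 1) (j + 1) y ∂(M (j + 1) x))
            ∂((Z (j + 1))⁻¹ • ν.withDensity fun x => ENNReal.ofReal (γ (j + 1) x))) := by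
          conv_lhs => rw [hwd]
          rw [lintegral_smul_measure, smul_eq_mul]
      _ = (Z j)⁻¹ * (Z (j + 1) * ∫⁻ y, aisExp M w (n + 1) (j + 1) y
            ∂((Z (j + 1))⁻¹ • ν.withDensity fun x => ENNReal.ofReal (γ (j + 1) x))) := by
          rw [← Measure.lintegral_bind (M (j + 1)).measurable.aemeasurable hf.aemeasurable,
            hinv (j + 1) (by omega) (by omega)]
      _ = (Z j)⁻¹ * (Z (j + 1) * (Z (j + 1 + (n + 1)) / Z (j + 1))) := by rw [IH]
      _ = Z (j + (n + 2)) / Z j := by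
          rw [ENNReal.mul_div_cancel hZ1ne hZ1top, div_eq_mul_inv, mul_comm]
          congr 2
          omega

/-- **Unbiasedness of annealed importance sampling.**
Let `γ_0, …, γ_K` be positive measurable unnormalized densities w.r.t. a σ-finite measure
`ν` with `Z_k = ∫ γ_k dν ∈ (0, ∞)`, and for `k = 1, …, K−1` let `M_k` be a Markov kernel
leaving the probability measure `μ_k = Z_k⁻¹·(γ_k dν)` invariant. Run the chain
`X_0 ∼ μ_0`, `X_k ∼ M_k(X_{k−1}, ·)` for `k = 1, …, K−1`. Then the AIS weight
`W = ∏_{k=0}^{K−1} γ_{k+1}(X_k)/γ_k(X_k)` satisfies `E[W] = Z_K / Z_0`. -/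
theorem ais_weight_unbiased {E : Type*} [MeasurableSpace E]
    (ν : Measure E) [SigmaFinite ν] (K : ℕ) (hK : 1 ≤ K)
    (γ : ℕ → E → ℝ)
    (hγ_pos : ∀ k, k ≤ K → ∀ x, 0 < γ k x)
    (hγ_meas : ∀ k, k ≤ K → Measurable (γ k))
    (Z : ℕ → ℝ≥0∞)
    (hZ : ∀ k, k ≤ K → Z k = ∫⁻ x, ENNReal.ofReal (γ k x) ∂ν)
    (hZ_pos : ∀ k, k ≤ K → 0 < Z k) (hZ_fin : ∀ k, k ≤ K → Z k < ⊤)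
    (M : ℕ → Kernel E E) (hM : ∀ k, 1 ≤ k → k ≤ K - 1 → IsMarkovKernel (M k))
    (hinv : ∀ k, 1 ≤ k → k ≤ K - 1 →
      Measure.bind ((Z k)⁻¹ • ν.withDensity fun x => ENNReal.ofReal (γ k x)) (M k) =
        (Z k)⁻¹ • ν.withDensity fun x => ENNReal.ofReal (γ k x)) :
    (∫⁻ x₀, aisExp M (fun k x => ENNReal.ofReal (γ (k + 1) x / γ k x)) K 0 x₀
        ∂((Z 0)⁻¹ • ν.withDensity fun x => ENNReal.ofReal (γ 0 x))) =
      Z K / Z 0 := by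
  have := ais_key ν K γ hγ_pos hγ_meas Z hZ hZ_pos hZ_fin M hM hinv K 0 hK (by omega)
  simpa using this
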